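/- A composition c = (c_1,…,c_k) of n ≥ 1 satisfies P(c) > 0 (i.e., there exists a permutation of [n] with peak set S(c)) if and only if k = 1, or c_i ≥ 2 for all 1 ≤ i ≤ k−1 and c_k ≥ 1. -/
import Mathlib


/-- `i` (1-based, with `1 < i < n`) is a peak of the permutation `σ` of `{1,…,n}`
(represented as a permutation of `Fin n`, position `j` (1-based) being index `j-1`). -/
def IsPeak {n : ℕ} (σ : Equiv.Perm (Fin n)) (i : ℕ) : Prop :=
  ∃ (h₂ : 2 ≤ i) (h₃ : i < n),
    σ ⟨i - 2, by omega⟩ < σ ⟨i - 1, by omega⟩ ∧ σ ⟨i, h₃⟩ < σ ⟨i - 1, by omega⟩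

open Classical in
/-- The peak set of a permutation of `{1,…,n}` (as a set of 1-based positions). -/
noncomputable def peakSet {n : ℕ} (σ : Equiv.Perm (Fin n)) : Finset ℕ :=
  (Finset.range n).filter (fun i => IsPeak σ i)

/-- `P(S;n)`: the number of permutations of `{1,…,n}` with peak set `S`. -/
noncomputable def numPeakSet (n : ℕ) (S : Finset ℕ) : ℕ :=
  Nat.card {σ : Equiv.Perm (Fin n) // peakSet σ = S}

/-- `c` is a composition of `n`: a list of positive integers summing to `n`. -/
def IsComposition (n : ℕ) (c : List ℕ) : Prop :=
  (∀ x ∈ c, 0 < x) ∧ c.sum = n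

/-- The set `S(c)` of proper partial sums of the composition `c`. -/
def compPeaks (c : List ℕ) : Finset ℕ :=
  (Finset.range (c.length - 1)).image (fun i => (c.take (i + 1)).sum)

/-- `P(c)`: the number of permutations of `{1,…,|c|}` whose peak set is `S(c)`. -/
noncomputable def Pcomp (c : List ℕ) : ℕ :=
  numPeakSet c.sum (compPeaks c)

/-- A composition is maximal if `P(b) ≤ P(c)` for every composition `b` of the same size. -/
def IsMaximal (c : List ℕ) : Prop :=
  ∀ b : List ℕ, IsComposition c.sum b → Pcomp b ≤ Pcomp c

/-- the involution creating peaks at `S` -/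
def pfun (n : ℕ) (S : Finset ℕ) (m : Fin n) : Fin n :=
  if h : (m : ℕ) + 1 ∈ S ∧ (m : ℕ) + 1 < n then ⟨(m : ℕ) + 1, h.2⟩
  else if (m : ℕ) ∈ S then ⟨(m : ℕ) - 1, by omega⟩ else m

theorem pfun_val (n : ℕ) (S : Finset ℕ) (a : ℕ) (h : a < n) :
    ((pfun n S ⟨a, h⟩ : Fin n) : ℕ) =
      if a + 1 ∈ S ∧ a + 1 < n then a + 1 else if a ∈ S then a - 1 else a := by
  unfold pfun
  split_ifs with h1 h2 <;> rfl

theorem pfun_invol (n : ℕ) (S : Finset ℕ)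
    (h1 : ∀ s ∈ S, 2 ≤ s ∧ s < n) (h2 : ∀ s ∈ S, s + 1 ∉ S) :
    Function.Involutive (pfun n S) := by
  intro m
  apply Fin.ext
  obtain ⟨a, ha⟩ := m
  rw [show pfun n S ⟨a, ha⟩ = ⟨_, (pfun n S ⟨a, ha⟩).isLt⟩ from rfl]
  rw [pfun_val, pfun_val]
  by_cases hA : a + 1 ∈ S ∧ a + 1 < n
  · rw [if_pos hA]
    have h2' : a + 1 + 1 ∉ S := h2 _ hA.1
    rw [if_neg (by tauto), if_pos hA.1]
    exact show a + 1 - 1 = a by omega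
  · rw [if_neg hA]
    by_cases hB : a ∈ S
    · rw [if_pos hB]
      have hm2 : 2 ≤ a := (h1 _ hB).1
      rw [if_pos ⟨by rwa [show a - 1 + 1 = a from by omega], by omega⟩]
      exact show a - 1 + 1 = a by omega
    · rw [if_neg hB, if_neg hA, if_neg hB]

theorem exists_perm (n : ℕ) (S : Finset ℕ)
    (h1 : ∀ s ∈ S, 2 ≤ s ∧ s < n) (h2 : ∀ s ∈ S, s + 1 ∉ S) :
    ∃ σ : Equiv.Perm (Fin n), peakSet σ = S := by
  refine ⟨(pfun_invol n S h1 h2).toPerm, ?_⟩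
  have hc : ⇑(pfun_invol n S h1 h2).toPerm = pfun n S :=
    Function.Involutive.coe_toPerm _
  ext i
  simp only [peakSet, Finset.mem_filter, Finset.mem_range]
  constructor
  · rintro ⟨hi, h2i, h3i, hL, hR⟩
    by_contra hiS
    rw [hc, Fin.lt_def, pfun_val, pfun_val] at hR
    rw [if_neg (show ¬(i - 1 + 1 ∈ S ∧ i - 1 + 1 < n) from by
      rw [show i - 1 + 1 = i from by omega]; tauto)] at hR
    split_ifs at hR <;> omega
  · intro hiS
    obtain ⟨h2i, h3i⟩ := h1 _ hiS
    have eB : (if i - 1 + 1 ∈ S ∧ i - 1 + 1 < n then i - 1 + 1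
        else if i - 1 ∈ S then i - 1 - 1 else i - 1) = i := by
      rw [if_pos (show i - 1 + 1 ∈ S ∧ i - 1 + 1 < n from by
        rw [show i - 1 + 1 = i from by omega]; exact ⟨hiS, h3i⟩)]
      omega
    refine ⟨h3i, h2i, h3i, ?_, ?_⟩ <;>
      rw [hc, Fin.lt_def, pfun_val, pfun_val, eB]
    · rw [if_neg (show ¬(i - 2 + 1 ∈ S ∧ i - 2 + 1 < n) from by
        rw [show i - 2 + 1 = i - 1 from by omega]
        rintro ⟨h, -⟩
        exact h2 _ h (by rwa [show i - 1 + 1 = i from by omega]))]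
      split_ifs <;> omega
    · rw [if_neg (show ¬(i + 1 ∈ S ∧ i + 1 < n) from fun h => h2 _ hiS h.1),
        if_pos hiS]
      omega

section AuxProofs

theorem sum_take_mono (c : List ℕ) (a b : ℕ) (h : a ≤ b) :
    (c.take a).sum ≤ (c.take b).sum := by
  have e : c.take a = (c.take b).take a := by rw [List.take_take, Nat.min_eq_left h]
  rw [e]
  calc ((c.take b).take a).sum ≤ ((c.take b).take a).sum + ((c.take b).drop a).sum :=
        Nat.le_add_right _ _
    _ = (c.take b).sum := by rw [← List.sum_append, List.take_append_drop]

theorem mem_compPeaks_iff (c : List ℕ) (s : ℕ) :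
    s ∈ compPeaks c ↔ ∃ j, j < c.length - 1 ∧ (c.take (j + 1)).sum = s := by
  simp [compPeaks, Finset.mem_image, Finset.mem_range]

theorem peak_bounds {n : ℕ} (σ : Equiv.Perm (Fin n)) {s : ℕ} (h : s ∈ peakSet σ) :
    2 ≤ s ∧ s < n := by
  simp only [peakSet, Finset.mem_filter, Finset.mem_range] at h
  obtain ⟨-, h2, h3, -⟩ := h
  exact ⟨h2, h3⟩

theorem not_consecutive_peaks {n : ℕ} (σ : Equiv.Perm (Fin n)) {s : ℕ}
    (h : s ∈ peakSet σ) (h' : s + 1 ∈ peakSet σ) : False := by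
  simp only [peakSet, Finset.mem_filter, Finset.mem_range] at h h'
  obtain ⟨-, h2, h3, -, hR⟩ := h
  obtain ⟨-, h2', h3', hL', -⟩ := h'
  have e1 : (⟨s + 1 - 2, by omega⟩ : Fin n) = ⟨s - 1, by omega⟩ :=
    Fin.ext (show s + 1 - 2 = s - 1 from by omega)
  have e2 : (⟨s + 1 - 1, by omega⟩ : Fin n) = ⟨s, h3⟩ :=
    Fin.ext (show s + 1 - 1 = s from by omega)
  rw [e1, e2] at hL'
  exact absurd hR (not_lt.2 hL'.le)

end AuxProofs

theorem admissible_iff (n : ℕ) (hn : 1 ≤ n) (c : List ℕ) (hc : IsComposition n c) :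
    0 < Pcomp c ↔
      c.length = 1 ∨
        ((∀ i, i + 1 < c.length → 2 ≤ c.getD i 0) ∧ 1 ≤ c.getD (c.length - 1) 0) := by
  obtain ⟨hpos, hsum⟩ := hc
  have hlen : 0 < c.length := by
    rcases c with - | ⟨a, c⟩
    · simp at hsum; omega
    · simp
  have hlast : 1 ≤ c.getD (c.length - 1) 0 := by
    rw [List.getD_eq_getElem c 0 (by omega)]
    exact hpos _ (List.getElem_mem _)
  constructor
  · intro hP
    by_cases hl : c.length = 1
    · exact Or.inl hl
    refine Or.inr ⟨?_, hlast⟩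
    obtain ⟨⟨⟨σ, hσ⟩⟩, -⟩ := Nat.card_pos_iff.mp hP
    intro i hi
    have hti : (c.take (i + 1)).sum ∈ compPeaks c :=
      (mem_compPeaks_iff c _).mpr ⟨i, by omega, rfl⟩
    rcases Nat.eq_zero_or_pos i with rfl | hi1
    · -- first part: it is a peak value, so ≥ 2
      have := (peak_bounds σ (hσ ▸ hti)).1
      rwa [List.sum_take_succ _ _ (show 0 < c.length from by omega), List.take_zero,
        List.sum_nil, Nat.zero_add,
        ← List.getD_eq_getElem c 0 (show 0 < c.length from by omega)] at this
    · -- middle part: consecutive peaks are impossible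
      by_contra hlt
      have hmem : c.getD i 0 ∈ c := by
        rw [List.getD_eq_getElem c 0 (by omega)]
        exact List.getElem_mem _
      have hci : c.getD i 0 = 1 := by
        have := hpos _ hmem
        omega
      have htim : (c.take i).sum ∈ compPeaks c := by
        refine (mem_compPeaks_iff c _).mpr ⟨i - 1, by omega, ?_⟩
        rw [show i - 1 + 1 = i from by omega]
      have he : (c.take (i + 1)).sum = (c.take i).sum + 1 := by
        rw [List.sum_take_succ _ _ (show i < c.length from by omega),
          ← List.getD_eq_getElem c 0 (show i < c.length from by omega), hci]
      rw [he] at hti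
      exact not_consecutive_peaks σ (hσ ▸ htim) (hσ ▸ hti)
  · intro hyp
    have hall : ∀ i, i + 1 < c.length → 2 ≤ c.getD i 0 := by
      rcases hyp with h1 | ⟨h1, -⟩
      · intro i hi; omega
      · exact h1
    have h1 : ∀ s ∈ compPeaks c, 2 ≤ s ∧ s < c.sum := by
      intro s hs
      obtain ⟨j, hj, rfl⟩ := (mem_compPeaks_iff c _).mp hs
      constructor
      · calc 2 ≤ c.getD 0 0 := hall 0 (by omega)
          _ = (c.take 1).sum := by
            rw [List.sum_take_succ _ _ (show 0 < c.length from hlen), List.take_zero,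
              List.sum_nil, Nat.zero_add, List.getD_eq_getElem c 0 hlen]
          _ ≤ (c.take (j + 1)).sum := sum_take_mono c 1 (j + 1) (by omega)
      · have hd : 0 < (c.drop (j + 1)).sum := by
          have hjl : j + 1 < c.length := by omega
          rw [List.drop_eq_getElem_cons hjl, List.sum_cons]
          have := hpos _ (List.getElem_mem hjl)
          omega
        have : (c.take (j + 1)).sum + (c.drop (j + 1)).sum = c.sum := by
          rw [← List.sum_append, List.take_append_drop]
        omega
    have h2 : ∀ s ∈ compPeaks c, s + 1 ∉ compPeaks c := by
      intro s hs hs'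
      obtain ⟨j, hj, rfl⟩ := (mem_compPeaks_iff c _).mp hs
      obtain ⟨j', hj', he⟩ := (mem_compPeaks_iff c _).mp hs'
      rcases le_or_gt j' j with h | h
      · have := sum_take_mono c (j' + 1) (j + 1) (by omega)
        omega
      · have hjl : j + 1 < c.length := by omega
        have e1 : (c.take (j + 2)).sum = (c.take (j + 1)).sum + c.getD (j + 1) 0 := by
          rw [List.getD_eq_getElem c 0 hjl]
          exact List.sum_take_succ _ _ hjl
        have e2 : 2 ≤ c.getD (j + 1) 0 := hall (j + 1) (by omega)
        have e3 : (c.take (j + 2)).sum ≤ (c.take (j' + 1)).sum :=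
          sum_take_mono c (j + 2) (j' + 1) (by omega)
        omega
    obtain ⟨σ, hσ⟩ := exists_perm c.sum (compPeaks c) h1 h2
    exact Nat.card_pos_iff.mpr ⟨⟨⟨σ, hσ⟩⟩, inferInstance⟩
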